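/- Fix 0 < θ < π and let F_θ be the closed-form function built from Appell F₁ as above. Then F_θ(z) → 0 as z → −1 with z in the open unit disk, z ≠ −1. -/

import Mathlib

open Complex

/-- A complex number avoids the closed negative real axis (so the principal
branch power with base `w` behaves well). -/
def OffNegAxis (w : ℂ) : Prop := 0 < w.re ∨ w.im ≠ 0

/-- The Appell hypergeometric function `F₁(a,b,b′,c;x,y)` defined by the Euler
integral, with principal branch complex powers. -/
noncomputable def appellF1 (a b b' c : ℝ) (x y : ℂ) : ℂ :=
  ((Real.Gamma c / (Real.Gamma a * Real.Gamma (c - a)) : ℝ) : ℂ) *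
    ∫ s in (0 : ℝ)..1,
      (s : ℂ) ^ ((a : ℂ) - 1) * ((1 : ℂ) - (s : ℂ)) ^ ((c : ℂ) - (a : ℂ) - 1) *
        (1 - (s : ℂ) * x) ^ (-(b : ℂ)) * (1 - (s : ℂ) * y) ^ (-(b' : ℂ))

/-- `ξ(z) = (√π − i√θ)(z+1)/(2√π)`. -/
noncomputable def xiF (θ : ℝ) (z : ℂ) : ℂ :=
  (((Real.sqrt Real.pi : ℝ) : ℂ) - I * ((Real.sqrt θ : ℝ) : ℂ)) * (z + 1) /
    (2 * ((Real.sqrt Real.pi : ℝ) : ℂ))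

/-- `η(z) = (√π + i√θ)(z+1)/(2√π)`. -/
noncomputable def etaF (θ : ℝ) (z : ℂ) : ℂ :=
  (((Real.sqrt Real.pi : ℝ) : ℂ) + I * ((Real.sqrt θ : ℝ) : ℂ)) * (z + 1) /
    (2 * ((Real.sqrt Real.pi : ℝ) : ℂ))

/-- The common base `(π(z−1)² + θ(z+1)²)/(π+θ)` of `φ` and `ψ`. -/
noncomputable def baseF (θ : ℝ) (z : ℂ) : ℂ :=
  (((Real.pi : ℝ) : ℂ) * (z - 1) ^ 2 + ((θ : ℝ) : ℂ) * (z + 1) ^ 2) / (((Real.pi + θ : ℝ)) : ℂ)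

/-- `φ(z) = [(π(z−1)² + θ(z+1)²)/(π+θ)]^{(π+θ)/(2π)}` (principal branch). -/
noncomputable def phiF (θ : ℝ) (z : ℂ) : ℂ :=
  baseF θ z ^ ((((Real.pi + θ) / (2 * Real.pi) : ℝ)) : ℂ)

/-- `ψ(z) = [(π(z−1)² + θ(z+1)²)/(π+θ)]^{(π−θ)/(2π)}` (principal branch). -/
noncomputable def psiF (θ : ℝ) (z : ℂ) : ℂ :=
  baseF θ z ^ ((((Real.pi - θ) / (2 * Real.pi) : ℝ)) : ℂ)

/-- `δ(z) = [−√π(z−1) − i√θ(z+1)]^{(π−θ)/(2π)} [−√π(z−1) + i√θ(z+1)]^{(π−θ)/(2π)}`. -/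
noncomputable def deltaF (θ : ℝ) (z : ℂ) : ℂ :=
  (-((Real.sqrt Real.pi : ℝ) : ℂ) * (z - 1) - I * ((Real.sqrt θ : ℝ) : ℂ) * (z + 1)) ^
      ((((Real.pi - θ) / (2 * Real.pi) : ℝ)) : ℂ) *
    (-((Real.sqrt Real.pi : ℝ) : ℂ) * (z - 1) + I * ((Real.sqrt θ : ℝ) : ℂ) * (z + 1)) ^
      ((((Real.pi - θ) / (2 * Real.pi) : ℝ)) : ℂ)

/-- The closed-form Appell-`F₁` antiderivative `F_θ` of the Schwarz–Christoffel
integrand for the exterior map of the isosceles triangle `T_θ`. -/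
noncomputable def FTheta (θ : ℝ) (z : ℂ) : ℂ :=
  (z + 1) ^ (((1 - θ / Real.pi : ℝ)) : ℂ) *
    (-phiF θ z / z +
      ((2 : ℂ) ^ (((θ / Real.pi : ℝ)) : ℂ) *
          (((Real.pi : ℝ)) : ℂ) ^ ((((Real.pi + θ) / (2 * Real.pi) : ℝ)) : ℂ) /
          (((2 * Real.pi ^ 2 + Real.pi * θ - θ ^ 2 : ℝ)) : ℂ)) *
        (deltaF θ z / psiF θ z) *
        (-2 * (((2 * Real.pi - θ : ℝ)) : ℂ) *
            appellF1 (1 - θ / Real.pi) ((Real.pi - θ) / (2 * Real.pi))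
              ((Real.pi - θ) / (2 * Real.pi)) (2 - θ / Real.pi) (xiF θ z) (etaF θ z) +
          (((Real.pi + θ : ℝ)) : ℂ) * (z + 1) *
            appellF1 (2 - θ / Real.pi) ((Real.pi - θ) / (2 * Real.pi))
              ((Real.pi - θ) / (2 * Real.pi)) (3 - θ / Real.pi) (etaF θ z) (xiF θ z)))


lemma cpow_neg_abs_le {w : ℂ} (hw : 1/2 ≤ ‖w‖) {b : ℝ} (hb : 0 ≤ b) :
    ‖w ^ (-(b : ℂ))‖ ≤ 2 ^ b := by
  have hw0 : w ≠ 0 := by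
    intro h; rw [h] at hw; simp at hw; norm_num at hw
  rw [Complex.norm_cpow_of_ne_zero hw0]
  simp only [Complex.neg_re, Complex.ofReal_re, Complex.neg_im, Complex.ofReal_im, neg_zero,
    mul_zero, Real.exp_zero, div_one]
  rw [Real.rpow_neg (norm_nonneg w)]
  have h2 : (2 : ℝ) ^ b = (((2:ℝ)⁻¹) ^ b)⁻¹ := by
    rw [Real.inv_rpow (by norm_num), inv_inv]
  rw [h2]
  have hpos : (0:ℝ) < ((2:ℝ)⁻¹) ^ b := Real.rpow_pos_of_pos (by norm_num) b
  have hle : ((2:ℝ)⁻¹) ^ b ≤ ‖w‖ ^ b :=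
    Real.rpow_le_rpow (by norm_num) (by linarith) hb
  exact inv_anti₀ hpos hle

lemma appellF1_bound (a b b' c : ℝ) (ha : 0 < a) (hca : 0 < c - a)
    (hb : 0 ≤ b) (hb' : 0 ≤ b') :
    ∃ K : ℝ, 0 ≤ K ∧ ∀ x y : ℂ, ‖x‖ ≤ 1/2 → ‖y‖ ≤ 1/2 →
      ‖appellF1 a b b' c x y‖ ≤ K := by
  set g : ℝ → ℝ := fun s =>
    ‖(s : ℂ) ^ ((a : ℂ) - 1) * ((1 : ℂ) - (s : ℂ)) ^ ((c : ℂ) - (a : ℂ) - 1)‖ * (2 ^ b * 2 ^ b')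
    with hg
  have hbeta : IntervalIntegrable
      (fun s : ℝ => (s : ℂ) ^ ((a : ℂ) - 1) * ((1 : ℂ) - (s : ℂ)) ^ ((c : ℂ) - (a : ℂ) - 1))
      MeasureTheory.volume 0 1 := by
    have := Complex.betaIntegral_convergent (u := (a : ℂ)) (v := ((c - a : ℝ) : ℂ))
      (by simpa using ha) (by simpa using hca)
    have hexp : ((c - a : ℝ) : ℂ) - 1 = (c : ℂ) - (a : ℂ) - 1 := by push_cast; ring
    simpa [hexp] using this
  have hgi : IntervalIntegrable g MeasureTheory.volume 0 1 := hbeta.norm.mul_const _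
  refine ⟨|Real.Gamma c / (Real.Gamma a * Real.Gamma (c - a))| * |∫ s in (0:ℝ)..1, g s|,
    by positivity, fun x y hx hy => ?_⟩
  rw [appellF1, norm_mul]
  have hcoef : ‖(((Real.Gamma c / (Real.Gamma a * Real.Gamma (c - a)) : ℝ)) : ℂ)‖ =
      |Real.Gamma c / (Real.Gamma a * Real.Gamma (c - a))| := by
    rw [Complex.norm_real, Real.norm_eq_abs]
  rw [hcoef]
  have hI : ‖∫ s in (0:ℝ)..1,
      (s : ℂ) ^ ((a : ℂ) - 1) * ((1 : ℂ) - (s : ℂ)) ^ ((c : ℂ) - (a : ℂ) - 1) *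
        (1 - (s : ℂ) * x) ^ (-(b : ℂ)) * (1 - (s : ℂ) * y) ^ (-(b' : ℂ))‖ ≤
      |∫ s in (0:ℝ)..1, g s| := by
    apply intervalIntegral.norm_integral_le_abs_of_norm_le _ hgi
    rw [MeasureTheory.ae_restrict_iff' measurableSet_uIoc]
    refine Filter.Eventually.of_forall fun s hs => ?_
    rw [Set.uIoc_of_le (by norm_num : (0:ℝ) ≤ 1)] at hs
    obtain ⟨hs0, hs1⟩ := hs
    have habs : ‖(s : ℂ)‖ ≤ 1 := by
      rw [Complex.norm_real, Real.norm_eq_abs, abs_of_pos hs0]; exact hs1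
    have hsx : ‖(s : ℂ) * x‖ ≤ 1/2 := by
      rw [norm_mul]
      calc ‖(s : ℂ)‖ * ‖x‖ ≤ 1 * (1/2) :=
            mul_le_mul habs hx (norm_nonneg _) zero_le_one
        _ = 1/2 := by norm_num
    have hsy : ‖(s : ℂ) * y‖ ≤ 1/2 := by
      rw [norm_mul]
      calc ‖(s : ℂ)‖ * ‖y‖ ≤ 1 * (1/2) :=
            mul_le_mul habs hy (norm_nonneg _) zero_le_one
        _ = 1/2 := by norm_num
    have hwx : 1/2 ≤ ‖1 - (s : ℂ) * x‖ := by
      have h := norm_sub_norm_le (1 : ℂ) ((s : ℂ) * x)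
      simp only [norm_one] at h
      linarith
    have hwy : 1/2 ≤ ‖1 - (s : ℂ) * y‖ := by
      have h := norm_sub_norm_le (1 : ℂ) ((s : ℂ) * y)
      simp only [norm_one] at h
      linarith
    have h3 := cpow_neg_abs_le hwx hb
    have h4 := cpow_neg_abs_le hwy hb'
    rw [norm_mul, norm_mul]
    calc ‖(s : ℂ) ^ ((a : ℂ) - 1) * ((1 : ℂ) - (s : ℂ)) ^ ((c : ℂ) - (a : ℂ) - 1)‖ *
          ‖(1 - (s : ℂ) * x) ^ (-(b : ℂ))‖ * ‖(1 - (s : ℂ) * y) ^ (-(b' : ℂ))‖ ≤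
        ‖(s : ℂ) ^ ((a : ℂ) - 1) * ((1 : ℂ) - (s : ℂ)) ^ ((c : ℂ) - (a : ℂ) - 1)‖ *
          (2 ^ b) * (2 ^ b') := by
          gcongr
      _ = g s := by rw [hg]; ring
  calc |Real.Gamma c / (Real.Gamma a * Real.Gamma (c - a))| * ‖∫ s in (0:ℝ)..1,
        (s : ℂ) ^ ((a : ℂ) - 1) * ((1 : ℂ) - (s : ℂ)) ^ ((c : ℂ) - (a : ℂ) - 1) *
          (1 - (s : ℂ) * x) ^ (-(b : ℂ)) * (1 - (s : ℂ) * y) ^ (-(b' : ℂ))‖ ≤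
      |Real.Gamma c / (Real.Gamma a * Real.Gamma (c - a))| * |∫ s in (0:ℝ)..1, g s| :=
        mul_le_mul_of_nonneg_left hI (abs_nonneg _)

/-- for `0 < θ < π`, the closed-form function `F_θ` tends to `0`
as `z → −1` with `z` in the open unit disk, `z ≠ −1`. -/
theorem stmt_10 (θ : ℝ) (hθ : θ ∈ Set.Ioo 0 Real.pi) :
    Filter.Tendsto (FTheta θ)
      (nhdsWithin (-1) (Metric.ball (0 : ℂ) 1 \ {-1})) (nhds 0) := by
  obtain ⟨hθ0, hθπ⟩ := hθ
  have hπ : 0 < Real.pi := Real.pi_pos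
  set l := nhdsWithin (-1 : ℂ) (Metric.ball (0 : ℂ) 1 \ {-1}) with hl
  -- the function multiplying the vanishing power
  set G : ℂ → ℂ := fun z =>
    (-phiF θ z / z +
      ((2 : ℂ) ^ (((θ / Real.pi : ℝ)) : ℂ) *
          (((Real.pi : ℝ)) : ℂ) ^ ((((Real.pi + θ) / (2 * Real.pi) : ℝ)) : ℂ) /
          (((2 * Real.pi ^ 2 + Real.pi * θ - θ ^ 2 : ℝ)) : ℂ)) *
        (deltaF θ z / psiF θ z) *
        (-2 * (((2 * Real.pi - θ : ℝ)) : ℂ) *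
            appellF1 (1 - θ / Real.pi) ((Real.pi - θ) / (2 * Real.pi))
              ((Real.pi - θ) / (2 * Real.pi)) (2 - θ / Real.pi) (xiF θ z) (etaF θ z) +
          (((Real.pi + θ : ℝ)) : ℂ) * (z + 1) *
            appellF1 (2 - θ / Real.pi) ((Real.pi - θ) / (2 * Real.pi))
              ((Real.pi - θ) / (2 * Real.pi)) (3 - θ / Real.pi) (etaF θ z) (xiF θ z)))
    with hG
  -- z + 1 tends to 0 along l
  have hz1 : Filter.Tendsto (fun z : ℂ => z + 1) l (nhds 0) := by
    have hc : ContinuousAt (fun z : ℂ => z + 1) (-1) := by fun_prop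
    have h := hc.tendsto.mono_left
      (nhdsWithin_le_nhds (s := Metric.ball (0 : ℂ) 1 \ {-1}))
    simpa only [neg_add_cancel] using h
  -- first factor tends to 0
  have hexp_pos : (0 : ℝ) < 1 - θ / Real.pi := by
    have : θ / Real.pi < 1 := (div_lt_one hπ).mpr hθπ
    linarith
  have h1 : Filter.Tendsto (fun z : ℂ => (z + 1) ^ (((1 - θ / Real.pi : ℝ)) : ℂ)) l (nhds 0) := by
    have hc : ContinuousAt (fun w : ℂ => w ^ (((1 - θ / Real.pi : ℝ)) : ℂ)) 0 :=
      Complex.continuousAt_cpow_const_of_re_pos (Or.inl (by simp)) (by simpa using hexp_pos)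
    have h := hc.tendsto.comp hz1
    rwa [Complex.zero_cpow (by exact_mod_cast hexp_pos.ne')] at h
  -- continuity facts at -1
  have hπθ : (0 : ℝ) < Real.pi + θ := by linarith
  have hbase_cont : ContinuousAt (baseF θ) (-1) := by
    unfold baseF
    exact ContinuousAt.div_const (by fun_prop) _
  have hbase_val : baseF θ (-1) = ((4 * Real.pi / (Real.pi + θ) : ℝ) : ℂ) := by
    unfold baseF
    have hne : ((Real.pi : ℂ)) + (θ : ℂ) ≠ 0 := by exact_mod_cast hπθ.ne'
    push_cast
    rw [div_eq_div_iff hne hne]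
    ring
  have hbase_slit : baseF θ (-1) ∈ Complex.slitPlane := by
    rw [hbase_val]
    exact Complex.ofReal_mem_slitPlane.mpr (div_pos (by positivity) hπθ)
  have hphi : ContinuousAt (phiF θ) (-1) := by
    unfold phiF
    exact (continuousAt_cpow_const hbase_slit).comp hbase_cont
  have hpsi : ContinuousAt (psiF θ) (-1) := by
    unfold psiF
    exact (continuousAt_cpow_const hbase_slit).comp hbase_cont
  have hpsi_ne : psiF θ (-1) ≠ 0 := by
    unfold psiF
    rw [Ne, Complex.cpow_eq_zero_iff]
    rintro ⟨h0, -⟩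
    exact Complex.slitPlane_ne_zero hbase_slit h0
  have hA : ContinuousAt (fun z : ℂ => -phiF θ z / z) (-1) :=
    ContinuousAt.div hphi.neg continuousAt_id (by norm_num)
  -- deltaF continuity
  have hsqrtπ : (0 : ℝ) < Real.sqrt Real.pi := Real.sqrt_pos.mpr hπ
  have hd1val : -((Real.sqrt Real.pi : ℝ) : ℂ) * ((-1 : ℂ) - 1) -
      I * ((Real.sqrt θ : ℝ) : ℂ) * ((-1 : ℂ) + 1) = ((2 * Real.sqrt Real.pi : ℝ) : ℂ) := by
    push_cast; ring
  have hd2val : -((Real.sqrt Real.pi : ℝ) : ℂ) * ((-1 : ℂ) - 1) +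
      I * ((Real.sqrt θ : ℝ) : ℂ) * ((-1 : ℂ) + 1) = ((2 * Real.sqrt Real.pi : ℝ) : ℂ) := by
    push_cast; ring
  have hslit2 : ((2 * Real.sqrt Real.pi : ℝ) : ℂ) ∈ Complex.slitPlane :=
    Complex.ofReal_mem_slitPlane.mpr (by positivity)
  have hdelta : ContinuousAt (deltaF θ) (-1) := by
    unfold deltaF
    have hc1 : ContinuousAt (fun z : ℂ =>
        (-((Real.sqrt Real.pi : ℝ) : ℂ) * (z - 1) - I * ((Real.sqrt θ : ℝ) : ℂ) * (z + 1)) ^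
          ((((Real.pi - θ) / (2 * Real.pi) : ℝ)) : ℂ)) (-1) := by
      refine (continuousAt_cpow_const ?_).comp (by fun_prop)
      rw [hd1val]; exact hslit2
    have hc2 : ContinuousAt (fun z : ℂ =>
        (-((Real.sqrt Real.pi : ℝ) : ℂ) * (z - 1) + I * ((Real.sqrt θ : ℝ) : ℂ) * (z + 1)) ^
          ((((Real.pi - θ) / (2 * Real.pi) : ℝ)) : ℂ)) (-1) := by
      refine (continuousAt_cpow_const ?_).comp (by fun_prop)
      rw [hd2val]; exact hslit2
    exact hc1.mul hc2
  have hBD : ContinuousAt (fun z : ℂ => deltaF θ z / psiF θ z) (-1) :=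
    ContinuousAt.div hdelta hpsi hpsi_ne
  -- Appell bounds
  have hb0 : (0 : ℝ) ≤ (Real.pi - θ) / (2 * Real.pi) := by
    apply div_nonneg <;> linarith
  obtain ⟨K1, hK1nn, hK1⟩ := appellF1_bound (1 - θ / Real.pi) ((Real.pi - θ) / (2 * Real.pi))
    ((Real.pi - θ) / (2 * Real.pi)) (2 - θ / Real.pi) hexp_pos (by ring_nf; norm_num) hb0 hb0
  obtain ⟨K2, hK2nn, hK2⟩ := appellF1_bound (2 - θ / Real.pi) ((Real.pi - θ) / (2 * Real.pi))
    ((Real.pi - θ) / (2 * Real.pi)) (3 - θ / Real.pi) (by linarith) (by ring_nf; norm_num) hb0 hb0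
  -- xi and eta tend to 0
  have hxi : Filter.Tendsto (xiF θ) l (nhds 0) := by
    have hc : ContinuousAt (xiF θ) (-1) := by
      unfold xiF
      exact ContinuousAt.div_const (by fun_prop) _
    have hv : xiF θ (-1) = 0 := by simp [xiF]
    have := hc.tendsto.mono_left (nhdsWithin_le_nhds (s := Metric.ball (0 : ℂ) 1 \ {-1}))
    rwa [hv] at this
  have heta : Filter.Tendsto (etaF θ) l (nhds 0) := by
    have hc : ContinuousAt (etaF θ) (-1) := by
      unfold etaF
      exact ContinuousAt.div_const (by fun_prop) _
    have hv : etaF θ (-1) = 0 := by simp [etaF]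
    have := hc.tendsto.mono_left (nhdsWithin_le_nhds (s := Metric.ball (0 : ℂ) 1 \ {-1}))
    rwa [hv] at this
  -- eventual bounds
  have hev_xi : ∀ᶠ z in l, ‖xiF θ z‖ ≤ 1 / 2 := by
    have h0 : Filter.Tendsto (fun z => ‖xiF θ z‖) l (nhds 0) := by simpa using hxi.norm
    simpa using h0.eventually_le_const (by norm_num : (0:ℝ) < 1/2)
  have hev_eta : ∀ᶠ z in l, ‖etaF θ z‖ ≤ 1 / 2 := by
    have h0 : Filter.Tendsto (fun z => ‖etaF θ z‖) l (nhds 0) := by simpa using heta.norm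
    simpa using h0.eventually_le_const (by norm_num : (0:ℝ) < 1/2)
  have hev_z1 : ∀ᶠ z in l, ‖z + 1‖ ≤ 1 := by
    have h0 : Filter.Tendsto (fun z : ℂ => ‖z + 1‖) l (nhds 0) := by simpa using hz1.norm
    exact h0.eventually_le_const (by norm_num : (0:ℝ) < 1)
  have hev_A : ∀ᶠ z in l, ‖-phiF θ z / z‖ ≤ ‖-phiF θ (-1) / (-1)‖ + 1 := by
    have h0 := (hA.tendsto.mono_left (nhdsWithin_le_nhds (s := Metric.ball (0 : ℂ) 1 \ {-1}))).norm
    exact h0.eventually_le_const (lt_add_one _)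
  have hev_BD : ∀ᶠ z in l, ‖deltaF θ z / psiF θ z‖ ≤ ‖deltaF θ (-1) / psiF θ (-1)‖ + 1 := by
    have h0 := (hBD.tendsto.mono_left (nhdsWithin_le_nhds (s := Metric.ball (0 : ℂ) 1 \ {-1}))).norm
    exact h0.eventually_le_const (lt_add_one _)
  -- the bounded factor
  have h2 : Filter.IsBoundedUnder (· ≤ ·) l (fun z => ‖G z‖) := by
    refine ⟨(‖-phiF θ (-1) / (-1)‖ + 1) +
      ‖(2 : ℂ) ^ (((θ / Real.pi : ℝ)) : ℂ) *
          (((Real.pi : ℝ)) : ℂ) ^ ((((Real.pi + θ) / (2 * Real.pi) : ℝ)) : ℂ) /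
          (((2 * Real.pi ^ 2 + Real.pi * θ - θ ^ 2 : ℝ)) : ℂ)‖ *
        (‖deltaF θ (-1) / psiF θ (-1)‖ + 1) *
        (2 * (2 * Real.pi - θ) * K1 + (Real.pi + θ) * K2), ?_⟩
    rw [Filter.eventually_map]
    filter_upwards [hev_A, hev_BD, hev_xi, hev_eta, hev_z1] with z hzA hzBD hzxi hzeta hzz1
    simp only [hG]
    calc ‖-phiF θ z / z +
          ((2 : ℂ) ^ (((θ / Real.pi : ℝ)) : ℂ) *
              (((Real.pi : ℝ)) : ℂ) ^ ((((Real.pi + θ) / (2 * Real.pi) : ℝ)) : ℂ) /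
              (((2 * Real.pi ^ 2 + Real.pi * θ - θ ^ 2 : ℝ)) : ℂ)) *
            (deltaF θ z / psiF θ z) *
            (-2 * (((2 * Real.pi - θ : ℝ)) : ℂ) *
                appellF1 (1 - θ / Real.pi) ((Real.pi - θ) / (2 * Real.pi))
                  ((Real.pi - θ) / (2 * Real.pi)) (2 - θ / Real.pi) (xiF θ z) (etaF θ z) +
              (((Real.pi + θ : ℝ)) : ℂ) * (z + 1) *
                appellF1 (2 - θ / Real.pi) ((Real.pi - θ) / (2 * Real.pi))
                  ((Real.pi - θ) / (2 * Real.pi)) (3 - θ / Real.pi) (etaF θ z) (xiF θ z))‖ ≤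
        ‖-phiF θ z / z‖ +
          ‖(2 : ℂ) ^ (((θ / Real.pi : ℝ)) : ℂ) *
              (((Real.pi : ℝ)) : ℂ) ^ ((((Real.pi + θ) / (2 * Real.pi) : ℝ)) : ℂ) /
              (((2 * Real.pi ^ 2 + Real.pi * θ - θ ^ 2 : ℝ)) : ℂ)‖ *
            ‖deltaF θ z / psiF θ z‖ *
            ‖-2 * (((2 * Real.pi - θ : ℝ)) : ℂ) *
                appellF1 (1 - θ / Real.pi) ((Real.pi - θ) / (2 * Real.pi))
                  ((Real.pi - θ) / (2 * Real.pi)) (2 - θ / Real.pi) (xiF θ z) (etaF θ z) +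
              (((Real.pi + θ : ℝ)) : ℂ) * (z + 1) *
                appellF1 (2 - θ / Real.pi) ((Real.pi - θ) / (2 * Real.pi))
                  ((Real.pi - θ) / (2 * Real.pi)) (3 - θ / Real.pi) (etaF θ z) (xiF θ z)‖ := by
          refine (norm_add_le _ _).trans ?_
          rw [norm_mul, norm_mul]
      _ ≤ (‖-phiF θ (-1) / (-1)‖ + 1) +
          ‖(2 : ℂ) ^ (((θ / Real.pi : ℝ)) : ℂ) *
              (((Real.pi : ℝ)) : ℂ) ^ ((((Real.pi + θ) / (2 * Real.pi) : ℝ)) : ℂ) /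
              (((2 * Real.pi ^ 2 + Real.pi * θ - θ ^ 2 : ℝ)) : ℂ)‖ *
            (‖deltaF θ (-1) / psiF θ (-1)‖ + 1) *
            (2 * (2 * Real.pi - θ) * K1 + (Real.pi + θ) * K2) := by
          have hD : ‖-2 * (((2 * Real.pi - θ : ℝ)) : ℂ) *
                appellF1 (1 - θ / Real.pi) ((Real.pi - θ) / (2 * Real.pi))
                  ((Real.pi - θ) / (2 * Real.pi)) (2 - θ / Real.pi) (xiF θ z) (etaF θ z) +
              (((Real.pi + θ : ℝ)) : ℂ) * (z + 1) *
                appellF1 (2 - θ / Real.pi) ((Real.pi - θ) / (2 * Real.pi))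
                  ((Real.pi - θ) / (2 * Real.pi)) (3 - θ / Real.pi) (etaF θ z) (xiF θ z)‖ ≤
              2 * (2 * Real.pi - θ) * K1 + (Real.pi + θ) * K2 := by
            refine (norm_add_le _ _).trans ?_
            have e1 : ‖-2 * (((2 * Real.pi - θ : ℝ)) : ℂ) *
                appellF1 (1 - θ / Real.pi) ((Real.pi - θ) / (2 * Real.pi))
                  ((Real.pi - θ) / (2 * Real.pi)) (2 - θ / Real.pi) (xiF θ z) (etaF θ z)‖ ≤
                2 * (2 * Real.pi - θ) * K1 := by
              rw [norm_mul, norm_mul]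
              have hn2 : ‖(-2 : ℂ)‖ = 2 := by norm_num
              have hnc : ‖(((2 * Real.pi - θ : ℝ)) : ℂ)‖ = 2 * Real.pi - θ := by
                rw [Complex.norm_real, Real.norm_eq_abs, abs_of_pos (by linarith)]
              rw [hn2, hnc]
              have hap := hK1 (xiF θ z) (etaF θ z) hzxi hzeta
              exact mul_le_mul_of_nonneg_left hap (by linarith)
            have e2 : ‖(((Real.pi + θ : ℝ)) : ℂ) * (z + 1) *
                appellF1 (2 - θ / Real.pi) ((Real.pi - θ) / (2 * Real.pi))
                  ((Real.pi - θ) / (2 * Real.pi)) (3 - θ / Real.pi) (etaF θ z) (xiF θ z)‖ ≤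
                (Real.pi + θ) * K2 := by
              rw [norm_mul, norm_mul]
              have hnc : ‖(((Real.pi + θ : ℝ)) : ℂ)‖ = Real.pi + θ := by
                rw [Complex.norm_real, Real.norm_eq_abs, abs_of_pos hπθ]
              rw [hnc]
              have hap := hK2 (etaF θ z) (xiF θ z) hzeta hzxi
              refine le_trans (mul_le_mul (mul_le_mul le_rfl hzz1 (norm_nonneg _) hπθ.le) hap
                (norm_nonneg _) (by linarith)) (le_of_eq (by ring))
            linarith
          gcongr
  have h := Filter.Tendsto.zero_mul_isBoundedUnder_le h1 h2
  exact h
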